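/- The function σ_d(α) = (α(2d − α + 1) − {α}(1 − {α}))/2 is continuous and strictly increasing on the interval [0, d]. -/
import Mathlib

lemma gauss_real (n : ℕ) : ∑ k ∈ Finset.range n, ((k : ℝ) + 1) = n * (n + 1) / 2 := by
  induction n with
  | zero => simp
  | succ m ih =>
    rw [Finset.sum_range_succ, ih]
    push_cast
    ring

lemma sigma_eq_sum (d : ℕ) {α : ℝ} (h0 : 0 ≤ α) (hdα : α ≤ d) :
    (α * (2 * d - α + 1) - Int.fract α * (1 - Int.fract α)) / 2
      = ∑ k ∈ Finset.range d, min α ((k : ℝ) + 1) := by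
  set n : ℕ := ⌊α⌋.toNat with hn
  have hfl0 : (0 : ℤ) ≤ ⌊α⌋ := Int.le_floor.mpr (by simpa using h0)
  have hfloor : (⌊α⌋ : ℝ) = n := by
    rw [hn]; exact_mod_cast congrArg (Int.cast : ℤ → ℝ) (Int.toNat_of_nonneg hfl0).symm
  have hnle : (n : ℝ) ≤ α := hfloor ▸ Int.floor_le α
  have hlt : α < (n : ℝ) + 1 := by
    rw [← hfloor]; exact Int.lt_floor_add_one α
  have hnd : n ≤ d := by
    have : (n : ℝ) ≤ (d : ℝ) := hnle.trans hdα
    exact_mod_cast this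
  rw [Finset.range_eq_Ico, ← Finset.sum_Ico_consecutive _ (Nat.zero_le n) hnd]
  have h1 : ∑ k ∈ Finset.Ico 0 n, min α ((k : ℝ) + 1)
      = ∑ k ∈ Finset.Ico 0 n, ((k : ℝ) + 1) := by
    refine Finset.sum_congr rfl fun k hk => ?_
    have hk' : k < n := (Finset.mem_Ico.mp hk).2
    have : (k : ℝ) + 1 ≤ n := by exact_mod_cast hk'
    exact min_eq_right (this.trans hnle)
  have h2 : ∑ k ∈ Finset.Ico n d, min α ((k : ℝ) + 1)
      = (d - n : ℕ) * α := by
    rw [Finset.sum_congr rfl fun k hk => min_eq_left ?_]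
    · rw [Finset.sum_const, Nat.card_Ico, nsmul_eq_mul]
    · have hk' : n ≤ k := (Finset.mem_Ico.mp hk).1
      have : (n : ℝ) + 1 ≤ (k : ℝ) + 1 := by
        have : (n : ℝ) ≤ k := by exact_mod_cast hk'
        linarith
      linarith [hlt]
  rw [h1, h2, ← Finset.range_eq_Ico, gauss_real]
  have hfract : Int.fract α = α - n := by
    rw [Int.fract, hfloor]
  have hcast : ((d - n : ℕ) : ℝ) = (d : ℝ) - n := by
    push_cast [Nat.cast_sub hnd]; ring
  rw [hfract, hcast]
  ring

/-- The function `σ_d(α) = (α(2d − α + 1) − {α}(1 − {α}))/2` is continuous and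
strictly increasing on `[0, d]`. -/
theorem sigma_continuous_strictMono (d : ℕ) (hd : 1 ≤ d) :
    ContinuousOn
        (fun α : ℝ => (α * (2 * d - α + 1) - Int.fract α * (1 - Int.fract α)) / 2)
        (Set.Icc 0 (d : ℝ)) ∧
      StrictMonoOn
        (fun α : ℝ => (α * (2 * d - α + 1) - Int.fract α * (1 - Int.fract α)) / 2)
        (Set.Icc 0 (d : ℝ)) := by
  have hg : Continuous (fun α : ℝ => ∑ k ∈ Finset.range d, min α ((k : ℝ) + 1)) :=
    continuous_finset_sum _ fun i _ => continuous_id.min continuous_const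
  have heq : Set.EqOn
      (fun α : ℝ => (α * (2 * d - α + 1) - Int.fract α * (1 - Int.fract α)) / 2)
      (fun α : ℝ => ∑ k ∈ Finset.range d, min α ((k : ℝ) + 1))
      (Set.Icc 0 (d : ℝ)) := fun α hα => sigma_eq_sum d hα.1 hα.2
  constructor
  · exact hg.continuousOn.congr heq
  · intro x hx y hy hxy
    rw [heq hx, heq hy]
    refine Finset.sum_lt_sum (fun k _ => min_le_min hxy.le le_rfl) ⟨d - 1, ?_, ?_⟩
    · exact Finset.mem_range.mpr (by omega)
    · have hc : ((d - 1 : ℕ) : ℝ) + 1 = (d : ℝ) := by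
        have h : (d - 1) + 1 = d := Nat.succ_pred_eq_of_pos hd
        exact_mod_cast congrArg (Nat.cast : ℕ → ℝ) h
      rw [hc, min_eq_left (hxy.le.trans hy.2), min_eq_left hy.2]
      exact hxy
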